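/- On 𝔗_b, the modified centred triangular maximal operator 𝒯' is unbounded on L^1: for a point o, the function 𝒯'δ_o satisfies 𝒯'δ_o(x) ≥ 1/(2 b^{|x|} + 1) for every descendant x of o, and ∑_{x : o ⪰ x} 𝒯'δ_o(x) = ∞. -/

import Mathlib

open scoped ENNReal NNReal
open Set

/-- A locally finite tree presented via the data induced by a fixed geodesic ray `ω`:
a predecessor map `pred`, a height (Busemann) function `ht` increasing by one along `pred`,
finite successor sets, and connectedness (any two vertices have a common ancestor). -/
structure TreeData (V : Type*) where
  pred : V → V
  ht : V → ℤ
  ht_pred : ∀ x, ht (pred x) = ht x + 1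
  fiber_finite : ∀ x, {y | pred y = x}.Finite
  connected : ∀ x y, ∃ k l : ℕ, pred^[k] x = pred^[l] y

namespace TreeData

variable {V : Type*}

/-- The set of successors of a vertex. -/
def succs (t : TreeData V) (x : V) : Set V := {y | t.pred y = x}

/-- Every vertex has at least 3 neighbours, i.e. at least 2 successors. -/
def Thick (t : TreeData V) : Prop := ∀ x, 2 ≤ (t.succs x).ncard

/-- Homogeneous tree `𝔗_b`: every vertex has exactly `b+1` neighbours, i.e. `b` successors. -/
def Homog (t : TreeData V) (b : ℕ) : Prop := ∀ x, (t.succs x).ncard = b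

/-- The triangle with vertex `x` and height `R`: all descendants of `x` within `R` generations. -/
def tri (t : TreeData V) (x : V) (R : ℕ) : Set V := {y | ∃ j ≤ R, t.pred^[j] y = x}

/-- The base of the triangle with vertex `x` and height `R`: the `R`-fold successors of `x`. -/
def base (t : TreeData V) (x : V) (R : ℕ) : Set V := {y | t.pred^[R] y = x}

/-- The graph distance on the tree. -/
noncomputable def dist (t : TreeData V) (x y : V) : ℕ :=
  sInf {n | ∃ k l : ℕ, k + l = n ∧ t.pred^[k] x = t.pred^[l] y}

/-- Number of points of a set, as an element of `ℝ≥0∞` (counting measure). -/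
noncomputable def esize (E : Set V) : ℝ≥0∞ := ∑' _ : E, (1 : ℝ≥0∞)

/-- The average of `|f|` over a set, with respect to counting measure. -/
noncomputable def setAvg (t : TreeData V) (S : Set V) (f : V → ℝ) : ℝ≥0∞ :=
  (∑' y : S, (‖f y‖₊ : ℝ≥0∞)) / (S.ncard : ℝ≥0∞)

/-- The centred triangular maximal operator `𝒯`. -/
noncomputable def cmax (t : TreeData V) (f : V → ℝ) (x : V) : ℝ≥0∞ :=
  ⨆ R : ℕ, t.setAvg (t.tri x R) f

/-- The uncentred triangular maximal operator `𝒰`. -/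
noncomputable def umax (t : TreeData V) (f : V → ℝ) (x : V) : ℝ≥0∞ :=
  ⨆ (v : V) (R : ℕ) (_ : x ∈ t.tri v R), t.setAvg (t.tri v R) f

/-- The uncentred base maximal operator `ℬᵘ`. -/
noncomputable def ubmax (t : TreeData V) (f : V → ℝ) (x : V) : ℝ≥0∞ :=
  ⨆ (v : V) (R : ℕ) (_ : x ∈ t.tri v R), t.setAvg (t.base v R) f

/-- The modified triangle `T'_r(x) = T_r(x) ∪ {p^r(x)}`. -/
def mtri (t : TreeData V) (x : V) (r : ℕ) : Set V := t.tri x r ∪ {t.pred^[r] x}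

/-- The modified centred triangular maximal operator `𝒯'`. -/
noncomputable def cmax' (t : TreeData V) (f : V → ℝ) (x : V) : ℝ≥0∞ :=
  ⨆ r : ℕ, t.setAvg (t.mtri x r) f

/-- The modified uncentred triangular maximal operator `𝒰'`. -/
noncomputable def umax' (t : TreeData V) (f : V → ℝ) (x : V) : ℝ≥0∞ :=
  ⨆ (v : V) (r : ℕ) (_ : x ∈ t.mtri v r), t.setAvg (t.mtri v r) f

/-- The `ℓ^p` norm with respect to counting measure, for `p ∈ [1,∞]`. -/
noncomputable def eLp (p : ℝ≥0∞) (g : V → ℝ≥0∞) : ℝ≥0∞ :=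
  if p = ∞ then ⨆ v, g v else (∑' v, g v ^ p.toReal) ^ (1 / p.toReal)

/-- `|f|` as an `ℝ≥0∞`-valued function. -/
noncomputable def nn (f : V → ℝ) (x : V) : ℝ≥0∞ := (‖f x‖₊ : ℝ≥0∞)

/-- The point mass at `o`. -/
noncomputable def delta (o : V) : V → ℝ := ({o} : Set V).indicator fun _ => 1

end TreeData

section Aux

open Function

namespace TreeData

variable {V : Type*}

lemma ht_iterate (t : TreeData V) (x : V) (k : ℕ) :
    t.ht (t.pred^[k] x) = t.ht x + k := by
  induction k with
  | zero => simp
  | succ n ih =>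
    rw [Function.iterate_succ_apply', t.ht_pred, ih]
    push_cast; ring

lemma iter_unique (t : TreeData V) {x o : V} {k l : ℕ}
    (hk : t.pred^[k] x = o) (hl : t.pred^[l] x = o) : k = l := by
  have h1 := t.ht_iterate x k
  have h2 := t.ht_iterate x l
  rw [hk] at h1; rw [hl] at h2
  omega

lemma dist_eq (t : TreeData V) {o x : V} {k : ℕ} (hk : t.pred^[k] x = o) :
    t.dist o x = k := by
  have hmem : k ∈ {n | ∃ a c : ℕ, a + c = n ∧ t.pred^[a] o = t.pred^[c] x} :=
    ⟨0, k, by simp [hk]⟩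
  refine le_antisymm (Nat.sInf_le hmem) ?_
  obtain ⟨a, c, hac, he⟩ := Nat.sInf_mem (⟨k, hmem⟩ : Set.Nonempty _)
  have h1 := t.ht_iterate o a
  have h2 := t.ht_iterate x c
  have h3 := t.ht_iterate x k
  rw [he, h2] at h1
  rw [hk] at h3
  unfold TreeData.dist
  omega

lemma base_zero (t : TreeData V) (x : V) : t.base x 0 = {x} := by
  ext y; simp [TreeData.base]

lemma base_succ (t : TreeData V) (x : V) (n : ℕ) :
    t.base x (n + 1) = t.pred ⁻¹' (t.base x n) := by
  ext y; simp [TreeData.base, Function.iterate_succ_apply]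

lemma preimage_card (t : TreeData V) {b : ℕ} (hhom : t.Homog b) (S : Set V) (hS : S.Finite) :
    (t.pred ⁻¹' S).Finite ∧ (t.pred ⁻¹' S).ncard = b * S.ncard := by
  refine Set.Finite.induction_on
    (motive := fun S _ => (t.pred ⁻¹' S).Finite ∧ (t.pred ⁻¹' S).ncard = b * S.ncard) S hS ?_ ?_
  · simp
  · intro a s ha hs ih
    have hfib : t.pred ⁻¹' ({a} : Set V) = t.succs a := by
      ext y; simp [TreeData.succs]
    have hpre : t.pred ⁻¹' (insert a s) = t.succs a ∪ t.pred ⁻¹' s := by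
      rw [Set.insert_eq, Set.preimage_union, hfib]
    have hsa : (t.succs a).Finite := t.fiber_finite a
    have hdisj : Disjoint (t.succs a) (t.pred ⁻¹' s) := by
      rw [Set.disjoint_left]
      rintro y hy hy'
      exact ha (by rwa [show a = t.pred y from hy.symm])
    constructor
    · rw [hpre]; exact hsa.union ih.1
    · rw [hpre, Set.ncard_union_eq hdisj hsa ih.1, hhom a, ih.2,
        Set.ncard_insert_of_notMem ha hs]
      ring

lemma base_card (t : TreeData V) {b : ℕ} (hhom : t.Homog b) (x : V) :
    ∀ n, (t.base x n).Finite ∧ (t.base x n).ncard = b ^ n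
  | 0 => by
      rw [t.base_zero]
      exact ⟨Set.finite_singleton x, by simp⟩
  | n + 1 => by
      obtain ⟨h1, h2⟩ := t.base_card hhom x n
      obtain ⟨h3, h4⟩ := t.preimage_card hhom _ h1
      rw [t.base_succ]
      exact ⟨h3, by rw [h4, h2, pow_succ]; ring⟩

lemma tri_zero (t : TreeData V) (x : V) : t.tri x 0 = {x} := by
  ext y
  constructor
  · rintro ⟨j, hj, hy⟩
    interval_cases j
    simpa using hy
  · rintro rfl
    exact ⟨0, le_rfl, rfl⟩

lemma tri_succ (t : TreeData V) (x : V) (k : ℕ) :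
    t.tri x (k + 1) = t.tri x k ∪ t.base x (k + 1) := by
  ext y
  constructor
  · rintro ⟨j, hj, hy⟩
    rcases Nat.lt_or_ge j (k + 1) with h | h
    · exact Or.inl ⟨j, Nat.lt_succ_iff.mp h, hy⟩
    · have : j = k + 1 := le_antisymm hj h
      exact Or.inr (this ▸ hy)
  · rintro (⟨j, hj, hy⟩ | hy)
    · exact ⟨j, Nat.le_succ_of_le hj, hy⟩
    · exact ⟨k + 1, le_rfl, hy⟩

lemma tri_card (t : TreeData V) {b : ℕ} (hb : 2 ≤ b) (hhom : t.Homog b) (x : V) :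
    ∀ k, (t.tri x k).Finite ∧ (t.tri x k).ncard ≤ 2 * b ^ k
  | 0 => by
      rw [t.tri_zero]
      exact ⟨Set.finite_singleton x, by simp⟩
  | k + 1 => by
      obtain ⟨hf, hc⟩ := t.tri_card hb hhom x k
      obtain ⟨hf', hc'⟩ := t.base_card hhom x (k + 1)
      constructor
      · rw [t.tri_succ]; exact hf.union hf'
      · have hle := Set.ncard_union_le (t.tri x k) (t.base x (k + 1))
        have h2 : 2 * b ^ k ≤ b ^ (k + 1) := by
          rw [pow_succ, mul_comm]
          exact Nat.mul_le_mul_left _ hb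
        have h3 : 2 * b ^ (k + 1) = b ^ (k + 1) + b ^ (k + 1) := by ring
        rw [t.tri_succ]
        omega

lemma main_lb (t : TreeData V) {b : ℕ} (hb : 2 ≤ b) (hhom : t.Homog b) (o x : V)
    (k : ℕ) (hk : t.pred^[k] x = o) :
    (2 * (b : ℝ≥0∞) ^ k + 1)⁻¹ ≤ t.cmax' (TreeData.delta o) x := by
  have hmem : o ∈ t.mtri x k := by
    right
    exact hk.symm
  obtain ⟨htf, htc⟩ := t.tri_card hb hhom x k
  -- cardinality bound for the modified triangle
  have hn : (t.mtri x k).ncard ≤ 2 * b ^ k + 1 := by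
    have h1 := Set.ncard_union_le (t.tri x k) ({t.pred^[k] x} : Set V)
    have h2 : ({t.pred^[k] x} : Set V).ncard = 1 := Set.ncard_singleton _
    unfold TreeData.mtri
    omega
  have hnle : ((t.mtri x k).ncard : ℝ≥0∞) ≤ 2 * (b : ℝ≥0∞) ^ k + 1 := by
    calc ((t.mtri x k).ncard : ℝ≥0∞) ≤ ((2 * b ^ k + 1 : ℕ) : ℝ≥0∞) := by
          exact_mod_cast hn
      _ = 2 * (b : ℝ≥0∞) ^ k + 1 := by push_cast; ring
  have h1 : (1 : ℝ≥0∞) ≤ ∑' y : (t.mtri x k), (‖TreeData.delta o y‖₊ : ℝ≥0∞) := by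
    have hle := ENNReal.le_tsum (f := fun y : (t.mtri x k) => (‖TreeData.delta o y‖₊ : ℝ≥0∞))
      ⟨o, hmem⟩
    simpa [TreeData.delta] using hle
  refine le_trans ?_ (le_iSup (fun r => t.setAvg (t.mtri x r) (TreeData.delta o)) k)
  unfold TreeData.setAvg
  calc (2 * (b : ℝ≥0∞) ^ k + 1)⁻¹ = 1 / (2 * (b : ℝ≥0∞) ^ k + 1) := by
        rw [one_div]
    _ ≤ _ := ENNReal.div_le_div h1 hnle

end TreeData

end Aux

/-- On `𝔗_b`, the modified centred maximal operator `𝒯'` is unbounded on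
`L^1`: `𝒯'δ_o(x) ≥ 1/(2b^{|x|}+1)` for every descendant `x` of `o`, and the sum of
`𝒯'δ_o` over the descendants of `o` diverges. -/

theorem stmt17 {V : Type*} (t : TreeData V) (b : ℕ) (hb : 2 ≤ b) (hhom : t.Homog b)
    (o : V) :
    (∀ x, (∃ k : ℕ, t.pred^[k] x = o) →
        ((2 * (b : ℝ≥0∞) ^ (t.dist o x) + 1))⁻¹ ≤ t.cmax' (TreeData.delta o) x) ∧
      ∑' x : {x | ∃ k : ℕ, t.pred^[k] x = o}, t.cmax' (TreeData.delta o) x = ∞ := by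
    classical
  have hpart1 : ∀ x, (∃ k : ℕ, t.pred^[k] x = o) →
      ((2 * (b : ℝ≥0∞) ^ (t.dist o x) + 1))⁻¹ ≤ t.cmax' (TreeData.delta o) x := by
    rintro x ⟨k, hk⟩
    rw [t.dist_eq hk]
    exact t.main_lb hb hhom o x k hk
  refine ⟨hpart1, ?_⟩
  set D := {x | ∃ k : ℕ, t.pred^[k] x = o} with hD
  -- per-level lower bound
  have hbn1 : ∀ n : ℕ, (1 : ℝ≥0∞) ≤ (b : ℝ≥0∞) ^ n := by
    intro n
    refine one_le_pow₀ ?_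
    exact_mod_cast (by omega : (1 : ℕ) ≤ b)
  have hlevel : ∀ n : ℕ, (3 : ℝ≥0∞)⁻¹ ≤ ∑' x : (t.base o n), t.cmax' (TreeData.delta o) x := by
    intro n
    obtain ⟨hfin, hcard⟩ := t.base_card hhom o n
    haveI := hfin.fintype
    have hconst : ∑' _ : (t.base o n), (2 * (b : ℝ≥0∞) ^ n + 1)⁻¹
        = ((t.base o n).ncard : ℝ≥0∞) * (2 * (b : ℝ≥0∞) ^ n + 1)⁻¹ := by
      rw [tsum_fintype, Finset.sum_const, nsmul_eq_mul]
      congr 2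
      rw [Finset.card_univ, Set.ncard_eq_toFinset_card', Set.toFinset_card]
    have hstep : ∑' _ : (t.base o n), (2 * (b : ℝ≥0∞) ^ n + 1)⁻¹
        ≤ ∑' x : (t.base o n), t.cmax' (TreeData.delta o) x := by
      refine ENNReal.tsum_le_tsum fun x => ?_
      exact t.main_lb hb hhom o x n x.2
    refine le_trans ?_ hstep
    rw [hconst, hcard]
    have hne : (b : ℝ≥0∞) ^ n ≠ 0 :=
      pow_ne_zero _ (by exact_mod_cast (by omega : b ≠ 0))
    have hnt : (b : ℝ≥0∞) ^ n ≠ ⊤ := by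
      exact_mod_cast ENNReal.pow_ne_top (ENNReal.natCast_ne_top b)
    have hcast : ((b ^ n : ℕ) : ℝ≥0∞) = (b : ℝ≥0∞) ^ n := by push_cast; ring
    rw [hcast]
    have hkey : (3 : ℝ≥0∞)⁻¹ = (b : ℝ≥0∞) ^ n / (3 * (b : ℝ≥0∞) ^ n) := by
      rw [div_eq_mul_inv, ENNReal.mul_inv (Or.inl (by norm_num)) (Or.inl (by norm_num))]
      have : (b : ℝ≥0∞) ^ n * ((3 : ℝ≥0∞)⁻¹ * ((b : ℝ≥0∞) ^ n)⁻¹)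
          = ((b : ℝ≥0∞) ^ n * ((b : ℝ≥0∞) ^ n)⁻¹) * (3 : ℝ≥0∞)⁻¹ := by ring
      rw [this, ENNReal.mul_inv_cancel hne hnt, one_mul]
    have hbound : 2 * (b : ℝ≥0∞) ^ n + 1 ≤ 3 * (b : ℝ≥0∞) ^ n := by
      calc 2 * (b : ℝ≥0∞) ^ n + 1 ≤ 2 * (b : ℝ≥0∞) ^ n + (b : ℝ≥0∞) ^ n :=
            add_le_add_right (hbn1 n) _
        _ = 3 * (b : ℝ≥0∞) ^ n := by ring
    calc (3 : ℝ≥0∞)⁻¹ = (b : ℝ≥0∞) ^ n / (3 * (b : ℝ≥0∞) ^ n) := hkey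
      _ ≤ (b : ℝ≥0∞) ^ n / (2 * (b : ℝ≥0∞) ^ n + 1) := ENNReal.div_le_div le_rfl hbound
      _ = (b : ℝ≥0∞) ^ n * (2 * (b : ℝ≥0∞) ^ n + 1)⁻¹ := div_eq_mul_inv _ _
  -- inject the disjoint union of the bases into the set of descendants
  have hiter : ∀ n : ℕ, ∀ x : (t.base o n), (x : V) ∈ D := by
    rintro n ⟨x, hx⟩
    exact ⟨n, hx⟩
  set e : (Σ n : ℕ, (t.base o n)) → D := fun p => ⟨(p.2 : V), hiter p.1 p.2⟩ with he
  have hinj : Function.Injective e := by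
    rintro ⟨n, x, hx⟩ ⟨m, y, hy⟩ h
    have hval : x = y := congrArg Subtype.val h
    subst hval
    have : n = m := t.iter_unique hx hy
    subst this
    rfl
  have hle : ∑' p : (Σ n : ℕ, (t.base o n)), t.cmax' (TreeData.delta o) (p.2 : V)
      ≤ ∑' x : D, t.cmax' (TreeData.delta o) x :=
    ENNReal.summable.tsum_le_tsum_of_inj e hinj (fun _ _ => zero_le) (fun _ => le_rfl)
      ENNReal.summable
  have hsig : ∑' p : (Σ n : ℕ, (t.base o n)), t.cmax' (TreeData.delta o) (p.2 : V)
      = ∑' n : ℕ, ∑' x : (t.base o n), t.cmax' (TreeData.delta o) x :=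
    ENNReal.tsum_sigma' _
  have htop : (⊤ : ℝ≥0∞) ≤ ∑' x : D, t.cmax' (TreeData.delta o) x := by
    calc (⊤ : ℝ≥0∞) = ∑' _ : ℕ, (3 : ℝ≥0∞)⁻¹ :=
          (ENNReal.tsum_const_eq_top_of_ne_zero (by norm_num)).symm
      _ ≤ ∑' n : ℕ, ∑' x : (t.base o n), t.cmax' (TreeData.delta o) x :=
          ENNReal.tsum_le_tsum hlevel
      _ = _ := hsig.symm
      _ ≤ _ := hle
  exact top_unique htop
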